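/- arXiv:1005.4937 — 5 statements merged into one kernel-verified Lean document; each statement's English description precedes it below -/
import Mathlib

section
/- For x ≠ 0 in ℝⁿ, the operator norm of the derivative of the inversion J(x) = x/‖x‖² equals 1/‖x‖². -/
/-- The operator norm of the derivative of the inversion `J(x) = x/‖x‖²` at `x ≠ 0`
equals `1/‖x‖²`. -/
theorem norm_fderiv_inversion {n : ℕ} (x : EuclideanSpace ℝ (Fin n)) (hx : x ≠ 0) :
    ‖fderiv ℝ (fun y : EuclideanSpace ℝ (Fin n) => (‖y‖ ^ 2)⁻¹ • y) x‖ = (‖x‖ ^ 2)⁻¹ := by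
  have : Nontrivial (EuclideanSpace ℝ (Fin n)) := nontrivial_of_ne x 0 hx
  have hfun : (fun y : EuclideanSpace ℝ (Fin n) => (‖y‖ ^ 2)⁻¹ • y)
      = EuclideanGeometry.inversion 0 1 := by
    funext y
    simp [EuclideanGeometry.inversion_def, dist_eq_norm, div_pow, div_eq_mul_inv]
  have h := (EuclideanGeometry.hasFDerivAt_inversion (c := 0) (R := 1) hx).fderiv
  rw [hfun, h, norm_smul]
  have hrefl : ‖(Submodule.reflection (Submodule.span ℝ {x - 0})ᗮ :
      EuclideanSpace ℝ (Fin n) →L[ℝ] EuclideanSpace ℝ (Fin n))‖ = 1 :=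
    (Submodule.reflection (Submodule.span ℝ {x - 0})ᗮ).toLinearIsometry.norm_toContinuousLinearMap
  rw [hrefl, mul_one, dist_eq_norm, sub_zero]
  rw [Real.norm_eq_abs, abs_of_nonneg (by positivity)]
  field_simp
end

section
/- Let φ : (a,b) → ℝⁿ be a C³ curve with φ'(x) ≠ 0, let v(x) = ‖φ'(x)‖ and let κ(x) be the curvature of the curve at φ(x). Then the Ahlfors Schwarzian S₁φ = ⟨φ''',φ'⟩/‖φ'‖² − 3⟨φ'',φ'⟩²/‖φ'‖⁴ + (3/2)‖φ''‖²/‖φ'‖² satisfies S₁φ = (v'/v)' − (1/2)(v'/v)² + (1/2) v² κ². -/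
open RealInnerProductSpace Set

/-- Chuaqui–Gevirtz identity: for a C³ curve `φ : (a,b) → ℝⁿ` with `φ' ≠ 0`, speed
`v = ‖φ'‖` and Frenet curvature `κ = ‖T'‖/v` (where `T = φ'/v` is the unit tangent),
the Ahlfors Schwarzian
`S₁φ = ⟨φ''',φ'⟩/‖φ'‖² − 3⟨φ'',φ'⟩²/‖φ'‖⁴ + (3/2)‖φ''‖²/‖φ'‖²`
equals `(v'/v)' − (1/2)(v'/v)² + (1/2)v²κ²`. -/
theorem ahlfors_schwarzian_eq {n : ℕ} {a b : ℝ}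
    (φ φ' φ'' φ''' : ℝ → EuclideanSpace ℝ (Fin n))
    (hφ : ContDiffOn ℝ 3 φ (Ioo a b))
    (hd1 : ∀ x ∈ Ioo a b, HasDerivAt φ (φ' x) x)
    (hd2 : ∀ x ∈ Ioo a b, HasDerivAt φ' (φ'' x) x)
    (hd3 : ∀ x ∈ Ioo a b, HasDerivAt φ'' (φ''' x) x)
    (hne : ∀ x ∈ Ioo a b, φ' x ≠ 0)
    (v v' q : ℝ → ℝ) (hv : ∀ x, v x = ‖φ' x‖)
    (hv' : ∀ x ∈ Ioo a b, HasDerivAt v (v' x) x)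
    (hq : ∀ x ∈ Ioo a b, HasDerivAt (fun y => v' y / v y) (q x) x)
    (T' : ℝ → EuclideanSpace ℝ (Fin n))
    (hT : ∀ x ∈ Ioo a b, HasDerivAt (fun y => (v y)⁻¹ • φ' y) (T' x) x)
    (κ : ℝ → ℝ) (hκ : ∀ x, κ x = ‖T' x‖ / v x) :
    ∀ x ∈ Ioo a b,
      ⟪φ''' x, φ' x⟫ / ‖φ' x‖ ^ 2 - 3 * ⟪φ'' x, φ' x⟫ ^ 2 / ‖φ' x‖ ^ 4 +
          (3 / 2) * ‖φ'' x‖ ^ 2 / ‖φ' x‖ ^ 2 =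
        q x - (1 / 2) * (v' x / v x) ^ 2 + (1 / 2) * (v x) ^ 2 * (κ x) ^ 2 := by
  have hvv : ∀ y, v y * v y = ⟪φ' y, φ' y⟫ := by
    intro y
    rw [hv y, real_inner_self_eq_norm_mul_norm]
  have hvpos : ∀ y ∈ Ioo a b, 0 < v y := by
    intro y hy
    rw [hv y]
    exact norm_pos_iff.mpr (hne y hy)
  -- key: v y * v' y = ⟪φ'' y, φ' y⟫ on Ioo
  have key : ∀ y ∈ Ioo a b, v y * v' y = ⟪φ'' y, φ' y⟫ := by
    intro y hy
    have h1 : HasDerivAt (fun t => v t * v t) (v' y * v y + v y * v' y) y :=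
      (hv' y hy).mul (hv' y hy)
    have h2 : HasDerivAt (fun t => v t * v t) (⟪φ' y, φ'' y⟫ + ⟪φ'' y, φ' y⟫) y := by
      have h := (hd2 y hy).inner ℝ (hd2 y hy)
      simpa only [← hvv] using h
    have h3 := h1.unique h2
    have h4 : ⟪φ' y, φ'' y⟫ = ⟪φ'' y, φ' y⟫ := real_inner_comm _ _
    nlinarith [h3, h4]
  intro x hx
  have hvx := hvpos x hx
  have hvne : v x ≠ 0 := ne_of_gt hvx
  have hmem : Ioo a b ∈ nhds x := isOpen_Ioo.mem_nhds hx
  -- compute q x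
  have hden : HasDerivAt (fun t => ⟪φ' t, φ' t⟫ : ℝ → ℝ) (⟪φ' x, φ'' x⟫ + ⟪φ'' x, φ' x⟫) x :=
    (hd2 x hx).inner ℝ (hd2 x hx)
  have hnum : HasDerivAt (fun t => ⟪φ'' t, φ' t⟫ : ℝ → ℝ) (⟪φ'' x, φ'' x⟫ + ⟪φ''' x, φ' x⟫) x :=
    (hd3 x hx).inner ℝ (hd2 x hx)
  have hdne : ⟪φ' x, φ' x⟫ ≠ (0:ℝ) := by
    rw [← hvv]; positivity
  have hf : HasDerivAt (fun t => ⟪φ'' t, φ' t⟫ / ⟪φ' t, φ' t⟫ : ℝ → ℝ)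
      (((⟪φ'' x, φ'' x⟫ + ⟪φ''' x, φ' x⟫) * ⟪φ' x, φ' x⟫ -
        ⟪φ'' x, φ' x⟫ * (⟪φ' x, φ'' x⟫ + ⟪φ'' x, φ' x⟫)) / ⟪φ' x, φ' x⟫ ^ 2) x :=
    hnum.div hden hdne
  have heq : (fun y => v' y / v y) =ᶠ[nhds x] (fun t => ⟪φ'' t, φ' t⟫ / ⟪φ' t, φ' t⟫) := by
    filter_upwards [hmem] with y hy
    have hk := key y hy
    have hvy := (hvpos y hy).ne'
    rw [← hk, ← hvv]
    field_simp
  have hq' : HasDerivAt (fun y => v' y / v y)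
      (((⟪φ'' x, φ'' x⟫ + ⟪φ''' x, φ' x⟫) * ⟪φ' x, φ' x⟫ -
        ⟪φ'' x, φ' x⟫ * (⟪φ' x, φ'' x⟫ + ⟪φ'' x, φ' x⟫)) / ⟪φ' x, φ' x⟫ ^ 2) x :=
    hf.congr_of_eventuallyEq heq
  have hqx := (hq x hx).unique hq'
  -- compute T' x
  have hTd : HasDerivAt (fun y => (v y)⁻¹ • φ' y)
      ((v x)⁻¹ • φ'' x + (-(v' x) / v x ^ 2) • φ' x) x :=
    ((hv' x hx).inv hvne).smul (hd2 x hx)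
  have hTx : T' x = (v x)⁻¹ • φ'' x + (-(v' x) / v x ^ 2) • φ' x := (hT x hx).unique hTd
  -- norm squared of T'
  have hTnorm : ‖T' x‖ ^ 2 = ((v x)⁻¹)^2 * ⟪φ'' x, φ'' x⟫
      + 2 * ((v x)⁻¹ * (-(v' x) / v x ^ 2)) * ⟪φ'' x, φ' x⟫
      + (-(v' x) / v x ^ 2)^2 * ⟪φ' x, φ' x⟫ := by
    rw [← real_inner_self_eq_norm_sq, hTx]
    simp only [inner_add_add_self, real_inner_smul_left, real_inner_smul_right]
    rw [real_inner_comm (φ' x) (φ'' x)]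
    ring
  -- assemble
  have hn2 : ‖φ' x‖ ^ 2 = ⟪φ' x, φ' x⟫ := by rw [← hvv, hv]; ring
  have hn2' : ‖φ'' x‖ ^ 2 = ⟪φ'' x, φ'' x⟫ := (real_inner_self_eq_norm_sq _).symm
  have hκx : κ x ^ 2 * v x ^ 2 = ‖T' x‖ ^ 2 := by
    rw [hκ x]; field_simp
  have hsym : ⟪φ' x, φ'' x⟫ = ⟪φ'' x, φ' x⟫ := real_inner_comm _ _
  have hkx := key x hx
  rw [hqx, hn2, hn2']
  have hV : ⟪φ' x, φ' x⟫ = v x * v x := (hvv x).symm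
  have hW : ⟪φ'' x, φ' x⟫ = v x * v' x := hkx.symm
  have hk2 : (1:ℝ)/2 * v x ^ 2 * κ x ^ 2 = (1/2) * ‖T' x‖^2 := by
    nlinarith [hκx]
  rw [hk2, hTnorm, hsym, hV, hW]
  have h4 : ‖φ' x‖ ^ 4 = (v x * v x)^2 := by
    rw [hv]; ring
  rw [h4]
  field_simp
  ring
end

section
/- Let v : (−1,1) → (0,∞) be C², and suppose (v'/v)' − (1/2)(v'/v)² ≤ 2/(1−x²)² on (−1,1). Set V = v^{−1/2} and W(x) = V(x)/√(1−x²). Then W, reparametrized by hyperbolic arclength s = (1/2)log((1+x)/(1−x)), is convex, i.e. (d²/ds²) W(x(s)) ≥ 0. -/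
open Set Real

/-- If `v > 0` is C² on `(−1,1)` with `(v'/v)' − (1/2)(v'/v)² ≤ 2/(1−x²)²`, then
`W(x) = v(x)^{-1/2}/√(1−x²)`, reparametrized by hyperbolic arclength
`x(s) = (e^{2s}−1)/(e^{2s}+1)`, is convex. -/
theorem hyperbolic_convexity_of_schwarzian_bound
    (v v' q : ℝ → ℝ)
    (hv : ContDiffOn ℝ 2 v (Ioo (-1 : ℝ) 1))
    (hpos : ∀ x ∈ Ioo (-1 : ℝ) 1, 0 < v x)
    (hd1 : ∀ x ∈ Ioo (-1 : ℝ) 1, HasDerivAt v (v' x) x)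
    (hd2 : ∀ x ∈ Ioo (-1 : ℝ) 1, HasDerivAt (fun y => v' y / v y) (q x) x)
    (hbound : ∀ x ∈ Ioo (-1 : ℝ) 1,
      q x - (1 / 2) * (v' x / v x) ^ 2 ≤ 2 / (1 - x ^ 2) ^ 2) :
    ConvexOn ℝ univ
      (fun s : ℝ =>
        (1 / Real.sqrt (v ((Real.exp (2 * s) - 1) / (Real.exp (2 * s) + 1)))) /
          Real.sqrt (1 - ((Real.exp (2 * s) - 1) / (Real.exp (2 * s) + 1)) ^ 2)) := by
  set X : ℝ → ℝ := fun s => (Real.exp (2 * s) - 1) / (Real.exp (2 * s) + 1) with hXdef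
  have hmem : ∀ s : ℝ, X s ∈ Ioo (-1 : ℝ) 1 := by
    intro s
    have he : 0 < Real.exp (2 * s) := Real.exp_pos _
    constructor
    · rw [show X s = (Real.exp (2*s) - 1) / (Real.exp (2*s) + 1) from rfl,
        lt_div_iff₀ (by linarith)]
      linarith
    · rw [show X s = (Real.exp (2*s) - 1) / (Real.exp (2*s) + 1) from rfl,
        div_lt_one (by linarith)]
      linarith
  have hY : ∀ s : ℝ, 0 < 1 - X s ^ 2 := by
    intro s
    obtain ⟨h1, h2⟩ := hmem s
    nlinarith
  have hvX : ∀ s : ℝ, 0 < v (X s) := fun s => hpos _ (hmem s)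
  have hXd : ∀ s : ℝ, HasDerivAt X (1 - X s ^ 2) s := by
    intro s
    have he : 0 < Real.exp (2 * s) := Real.exp_pos _
    have h0 : HasDerivAt (fun t : ℝ => 2 * t) (2 : ℝ) s := by
      simpa using (hasDerivAt_id s).const_mul (2 : ℝ)
    have h1 : HasDerivAt (fun t : ℝ => Real.exp (2 * t)) (Real.exp (2 * s) * 2) s := h0.exp
    have h2 : HasDerivAt X
        ((Real.exp (2*s) * 2 * (Real.exp (2*s) + 1) -
          (Real.exp (2*s) - 1) * (Real.exp (2*s) * 2)) / (Real.exp (2*s) + 1) ^ 2) s :=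
      (h1.sub_const 1).div (h1.add_const 1) (by positivity)
    convert h2 using 1
    rw [show X s = (Real.exp (2*s) - 1) / (Real.exp (2*s) + 1) from rfl]
    rw [div_pow, eq_div_iff (by positivity : ((Real.exp (2*s) + 1) : ℝ)^2 ≠ 0)]
    have hne : ((Real.exp (2*s) + 1) : ℝ)^2 ≠ 0 := by positivity
    field_simp
    ring
  -- u and its derivatives
  set P : ℝ → ℝ := fun s => v' (X s) / v (X s) * (1 - X s ^ 2) - 2 * X s with hPdef
  set F : ℝ → ℝ := fun s => Real.exp (-(1/2) * (Real.log (v (X s)) + Real.log (1 - X s ^ 2)))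
    with hFdef
  have hFpos : ∀ s, 0 < F s := fun s => Real.exp_pos _
  have hueq : ∀ s : ℝ, HasDerivAt
      (fun t => Real.log (v (X t)) + Real.log (1 - X t ^ 2)) (P s) s := by
    intro s
    have h1 : HasDerivAt (fun t => v (X t)) (v' (X s) * (1 - X s ^ 2)) s :=
      (hd1 _ (hmem s)).comp s (hXd s)
    have h2 : HasDerivAt (fun t => Real.log (v (X t)))
        (v' (X s) * (1 - X s ^ 2) / v (X s)) s := h1.log (ne_of_gt (hvX s))
    have h3 : HasDerivAt (fun t => 1 - X t ^ 2) (-(2 * X s) * (1 - X s ^ 2)) s := by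
      have := ((hXd s).pow 2).const_sub 1
      refine this.congr_deriv ?_
      ring
    have h4 : HasDerivAt (fun t => Real.log (1 - X t ^ 2))
        (-(2 * X s) * (1 - X s ^ 2) / (1 - X s ^ 2)) s := h3.log (ne_of_gt (hY s))
    have h5 := h2.add h4
    refine h5.congr_deriv ?_
    rw [mul_div_cancel_right₀ _ (ne_of_gt (hY s)), hPdef]
    ring
  have hFd : ∀ s : ℝ, HasDerivAt F (-(1/2) * P s * F s) s := by
    intro s
    have := (Real.hasDerivAt_exp _).comp s ((hueq s).const_mul (-(1/2)))
    refine this.congr_deriv ?_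
    ring
  set P' : ℝ → ℝ := fun s => q (X s) * (1 - X s ^ 2) ^ 2
      + v' (X s) / v (X s) * (-(2 * X s) * (1 - X s ^ 2)) - 2 * (1 - X s ^ 2) with hP'def
  have hPd : ∀ s : ℝ, HasDerivAt P (P' s) s := by
    intro s
    have h1 : HasDerivAt (fun t => v' (X t) / v (X t)) (q (X s) * (1 - X s ^ 2)) s :=
      (hd2 _ (hmem s)).comp s (hXd s)
    have h3 : HasDerivAt (fun t => 1 - X t ^ 2) (-(2 * X s) * (1 - X s ^ 2)) s := by
      have := ((hXd s).pow 2).const_sub 1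
      refine this.congr_deriv ?_
      ring
    have := (h1.mul h3).sub ((hXd s).const_mul 2)
    refine this.congr_deriv ?_
    rw [hP'def]
    ring
  set G : ℝ → ℝ := fun s => -(1/2) * P s * F s with hGdef
  have hGd : ∀ s : ℝ, HasDerivAt G (((1/4) * P s ^ 2 - (1/2) * P' s) * F s) s := by
    intro s
    have := ((hPd s).const_mul (-(1/2))).mul (hFd s)
    refine this.congr_deriv ?_
    ring
  have hkey : ∀ s : ℝ, 0 ≤ ((1/4) * P s ^ 2 - (1/2) * P' s) * F s := by
    intro s
    have hY2 : (0:ℝ) < (1 - X s ^ 2) ^ 2 := pow_pos (hY s) 2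
    have h2 : q (X s) - (1/2) * (v' (X s) / v (X s)) ^ 2 ≤ 2 / (1 - X s ^ 2) ^ 2 :=
      hbound _ (hmem s)
    have h3 : (q (X s) - (1/2) * (v' (X s) / v (X s)) ^ 2) * (1 - X s ^ 2) ^ 2 ≤ 2 := by
      rw [← le_div_iff₀ hY2]
      exact h2
    have h4 : 0 ≤ (1/4) * P s ^ 2 - (1/2) * P' s := by
      rw [hPdef, hP'def]
      dsimp only
      nlinarith [sq_nonneg (v' (X s) / v (X s) * (1 - X s ^ 2) - 2 * X s), hY s]
    exact mul_nonneg h4 (hFpos s).le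
  -- identify the target function with F
  have hsq : ∀ a : ℝ, 0 < a → Real.sqrt a = Real.exp (Real.log a / 2) := by
    intro a ha
    have h2 : Real.exp (Real.log a / 2) ^ 2 = a := by
      rw [sq, ← Real.exp_add, show Real.log a / 2 + Real.log a / 2 = Real.log a by ring,
        Real.exp_log ha]
    conv_lhs => rw [← h2]
    exact Real.sqrt_sq (Real.exp_nonneg _)
  have hTF : (fun s : ℝ => (1 / Real.sqrt (v (X s))) / Real.sqrt (1 - X s ^ 2)) = F := by
    funext s
    rw [hsq _ (hvX s), hsq _ (hY s), hFdef]
    dsimp only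
    rw [one_div, ← Real.exp_neg, div_eq_mul_inv, ← Real.exp_neg, ← Real.exp_add]
    congr 1
    ring
  rw [show (fun s : ℝ =>
        (1 / Real.sqrt (v (X s))) / Real.sqrt (1 - (X s) ^ 2)) = F from hTF]
  refine convexOn_of_hasDerivWithinAt2_nonneg (f' := G)
      (f'' := fun s => ((1/4) * P s ^ 2 - (1/2) * P' s) * F s) convex_univ ?_ ?_ ?_ ?_
  · exact fun s _ => (hFd s).continuousAt.continuousWithinAt
  · exact fun s _ => (hFd s).hasDerivWithinAt
  · exact fun s _ => (hGd s).hasDerivWithinAt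
  · exact fun s _ => hkey s
end

section
/- Let p : (−1,1) → ℝ with p(x) ≤ 1/(1−x²)², and let V > 0 solve V'' + pV = 0 on (−1,1). Then W(x) = V(x)/√(1−x²) satisfies (d²/ds²) W(x(s)) = (1/(1−x²)² − p(x)) (1−x²)² W(x) ≥ 0 in the hyperbolic arclength parameter s, with x = x(s) = (e^{2s}−1)/(e^{2s}+1). -/
open Set Real

/-- If `V > 0` solves `V'' + pV = 0` on `(−1,1)` with `p(x) ≤ 1/(1−x²)²`, then
`W(x) = V(x)/√(1−x²)` satisfies, in the hyperbolic arclength parameter `s` (with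
`x(s) = (e^{2s}−1)/(e^{2s}+1)`),
`(d²/ds²) W(x(s)) = (1/(1−x²)² − p(x))(1−x²)² W(x) ≥ 0`. -/
theorem second_deriv_W_hyperbolic
    (V V' V'' : ℝ → ℝ) (p : ℝ → ℝ)
    (hpos : ∀ x ∈ Ioo (-1 : ℝ) 1, 0 < V x)
    (hd1 : ∀ x ∈ Ioo (-1 : ℝ) 1, HasDerivAt V (V' x) x)
    (hd2 : ∀ x ∈ Ioo (-1 : ℝ) 1, HasDerivAt V' (V'' x) x)
    (hode : ∀ x ∈ Ioo (-1 : ℝ) 1, V'' x + p x * V x = 0)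
    (hp : ∀ x ∈ Ioo (-1 : ℝ) 1, p x ≤ 1 / (1 - x ^ 2) ^ 2)
    (W : ℝ → ℝ) (hW : ∀ x, W x = V x / Real.sqrt (1 - x ^ 2))
    (X : ℝ → ℝ) (hX : ∀ s, X s = (Real.exp (2 * s) - 1) / (Real.exp (2 * s) + 1)) :
    ∀ s : ℝ,
      deriv (deriv (fun t => W (X t))) s =
          (1 / (1 - X s ^ 2) ^ 2 - p (X s)) * (1 - X s ^ 2) ^ 2 * W (X s) ∧
        0 ≤ deriv (deriv (fun t => W (X t))) s := by
  have hXmem : ∀ s, X s ∈ Ioo (-1:ℝ) 1 := by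
    intro s
    have he : (0:ℝ) < Real.exp (2*s) + 1 := by positivity
    have hp2 := Real.exp_pos (2*s)
    constructor
    · rw [hX, lt_div_iff₀ he]; nlinarith
    · rw [hX, div_lt_one he]; linarith
  have hcosh : ∀ s : ℝ, (0:ℝ) < Real.cosh s := fun s => Real.cosh_pos (x := s)
  have hexp2 : ∀ s:ℝ, Real.exp (2*s) = Real.exp s * Real.exp s := by
    intro s; rw [two_mul, Real.exp_add]
  have hexpinv : ∀ s:ℝ, Real.exp (-s) * Real.exp s = 1 := by
    intro s; rw [← Real.exp_add]; simp
  have hsqrt : ∀ s, Real.sqrt (1 - X s ^ 2) = 1 / Real.cosh s := by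
    intro s
    have h2 := Real.exp_pos s
    have h3 := Real.exp_pos (-s)
    have h4 := hexpinv s
    have h1 : (1:ℝ) - X s ^ 2 = (1 / Real.cosh s)^2 := by
      rw [hX, Real.cosh_eq, hexp2]
      field_simp
      nlinarith [h4]
    rw [h1, Real.sqrt_sq (by positivity)]
  have hsinh : ∀ s, Real.sinh s = X s * Real.cosh s := by
    intro s
    have h2 := Real.exp_pos s
    have h3 := Real.exp_pos (-s)
    have h4 := hexpinv s
    rw [hX, Real.sinh_eq, Real.cosh_eq, hexp2]
    field_simp
    nlinarith [h4]
  have hX' : ∀ s, HasDerivAt X (1 - X s ^ 2) s := by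
    intro s
    have h2s : HasDerivAt (fun t:ℝ => 2*t) 2 s := by
      simpa using (hasDerivAt_id s).const_mul 2
    have he : HasDerivAt (fun t => Real.exp (2*t)) (Real.exp (2*s) * 2) s :=
      (Real.hasDerivAt_exp (2*s)).comp s h2s
    have hden : Real.exp (2*s) + 1 ≠ 0 := by positivity
    have h := (he.sub_const 1).div (he.add_const 1) hden
    have hXe : X = fun t => (Real.exp (2*t) - 1)/(Real.exp (2*t)+1) := funext hX
    rw [hXe]
    refine h.congr_deriv ?_
    have hp2 := Real.exp_pos (2*s)
    field_simp
    ring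
  have hWX : (fun t => W (X t)) = fun t => V (X t) * Real.cosh t := by
    funext t
    rw [hW, hsqrt]
    field_simp
  have hstep1 : ∀ s, HasDerivAt (fun t => W (X t))
      (V' (X s) * (1 - X s ^ 2) * Real.cosh s + V (X s) * Real.sinh s) s := by
    intro s
    rw [hWX]
    have h1 : HasDerivAt (fun t => V (X t)) (V' (X s) * (1 - X s^2)) s :=
      (hd1 (X s) (hXmem s)).comp s (hX' s)
    exact h1.mul (Real.hasDerivAt_cosh s)
  have hderiv1 : deriv (fun t => W (X t)) =
      fun s => V' (X s) * (1 - X s ^ 2) * Real.cosh s + V (X s) * Real.sinh s :=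
    funext fun s => (hstep1 s).deriv
  intro s
  have h1 : HasDerivAt (fun t => V' (X t)) (V'' (X s) * (1 - X s^2)) s :=
    (hd2 (X s) (hXmem s)).comp s (hX' s)
  have h2 : HasDerivAt (fun t => 1 - X t ^ 2) (-(2 * X s * (1 - X s^2))) s := by
    have hpow := (hX' s).pow 2
    have := (hasDerivAt_const s (1:ℝ)).sub hpow
    refine this.congr_deriv ?_
    push_cast; ring
  have h3 : HasDerivAt (fun t => V (X t)) (V' (X s) * (1 - X s^2)) s :=
    (hd1 (X s) (hXmem s)).comp s (hX' s)
  have hGd : HasDerivAt (fun s => V' (X s) * (1 - X s ^ 2) * Real.cosh s + V (X s) * Real.sinh s)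
      ((V'' (X s) * (1 - X s^2) * (1 - X s^2) + V' (X s) * (-(2 * X s * (1 - X s^2)))) * Real.cosh s
        + V' (X s) * (1 - X s^2) * Real.sinh s
        + (V' (X s) * (1 - X s^2) * Real.sinh s + V (X s) * Real.cosh s)) s := by
    exact ((h1.mul h2).mul (Real.hasDerivAt_cosh s)).add
      (h3.mul (Real.hasDerivAt_sinh s))
  have hWc : W (X s) = V (X s) * Real.cosh s := congrFun hWX s
  have hode' := hode (X s) (hXmem s)
  have hV'' : V'' (X s) = -(p (X s) * V (X s)) := by linarith
  have hne : (1 - X s^2) ≠ 0 := by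
    obtain ⟨ha, hb⟩ := hXmem s; nlinarith
  have key : deriv (deriv (fun t => W (X t))) s =
      (1 / (1 - X s ^2)^2 - p (X s)) * (1 - X s^2)^2 * W (X s) := by
    rw [hderiv1, hGd.deriv, hWc, hV'', hsinh s]
    field_simp
    ring
  refine ⟨key, ?_⟩
  rw [key]
  have h0 : 0 < W (X s) := by rw [hWc]; exact mul_pos (hpos _ (hXmem s)) (hcosh s)
  have h1' : 0 ≤ 1 / (1 - X s^2)^2 - p (X s) := sub_nonneg.2 (hp _ (hXmem s))
  have h2' : (0:ℝ) ≤ (1 - X s^2)^2 := by positivity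
  exact mul_nonneg (mul_nonneg h1' h2') h0.le
end

section
/- Let σ : 𝔻 → ℝ be C² on the unit disk with σ_z(0) = 0 and satisfying |σ_{zz}(z) − σ_z(z)²| + 2|σ_{z\bar z}(z)| ≤ 1/(1−|z|²)² for all z ∈ 𝔻. Then ‖∇σ(z)‖ ≤ 2|z|/(1−|z|²) for all z ∈ 𝔻. -/
open Complex Metric

/-- Wirtinger derivative `∂/∂z` of a real-valued function on ℂ. -/
noncomputable def wirtingerZReal (σ : ℂ → ℝ) (z : ℂ) : ℂ :=
  ((fderiv ℝ σ z 1 : ℝ) - Complex.I * (fderiv ℝ σ z Complex.I : ℝ)) / 2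

/-- Wirtinger derivative `∂/∂z` of a complex-valued function on ℂ. -/
noncomputable def wirtingerZ (g : ℂ → ℂ) (z : ℂ) : ℂ :=
  (fderiv ℝ g z 1 - Complex.I * fderiv ℝ g z Complex.I) / 2

/-- Wirtinger derivative `∂/∂z̄` of a complex-valued function on ℂ. -/
noncomputable def wirtingerZBar (g : ℂ → ℂ) (z : ℂ) : ℂ :=
  (fderiv ℝ g z 1 + Complex.I * fderiv ℝ g z Complex.I) / 2

lemma opnorm_le_two_wirt (σ : ℂ → ℝ) (z : ℂ) :
    ‖fderiv ℝ σ z‖ ≤ 2 * ‖wirtingerZReal σ z‖ := by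
  set L := fderiv ℝ σ z with hL
  set a := L 1 with ha
  set c := L Complex.I with hc
  have hw2 : (2 * ‖wirtingerZReal σ z‖) ^ 2 = a ^ 2 + c ^ 2 := by
    have h0 : wirtingerZReal σ z = ((a : ℂ) - Complex.I * (c : ℂ)) / 2 := rfl
    have h1 : ‖((a : ℂ) - Complex.I * (c : ℂ))‖ ^ 2 = a ^ 2 + c ^ 2 := by
      rw [Complex.sq_norm, Complex.normSq_apply]
      simp
      ring
    rw [h0, norm_div]
    simp only [Complex.norm_ofNat]
    rw [mul_pow, div_pow, h1]
    ring
  apply ContinuousLinearMap.opNorm_le_bound _ (by positivity)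
  intro v
  have hval : L v = v.re * a + v.im * c := by
    have hv : v = v.re • (1 : ℂ) + v.im • Complex.I := by
      rw [Complex.real_smul, Complex.real_smul, mul_one, Complex.re_add_im]
    conv_lhs => rw [hv]
    rw [map_add, map_smul, map_smul]
    simp [smul_eq_mul]; rfl
  have hv2 : ‖v‖ ^ 2 = v.re ^ 2 + v.im ^ 2 := by
    rw [Complex.sq_norm, Complex.normSq_apply]; ring
  rw [hval, Real.norm_eq_abs]
  have h1 : |v.re * a + v.im * c| ^ 2 ≤ (2 * ‖wirtingerZReal σ z‖ * ‖v‖) ^ 2 := by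
    rw [_root_.sq_abs, mul_pow, hw2, hv2]
    nlinarith [sq_nonneg (a * v.im - c * v.re)]
  calc |v.re * a + v.im * c| = Real.sqrt (|v.re * a + v.im * c| ^ 2) := by
        rw [Real.sqrt_sq (abs_nonneg _)]
    _ ≤ Real.sqrt ((2 * ‖wirtingerZReal σ z‖ * ‖v‖) ^ 2) := Real.sqrt_le_sqrt h1
    _ = 2 * ‖wirtingerZReal σ z‖ * ‖v‖ := Real.sqrt_sq (by positivity)

lemma clm_decomp (L : ℂ →L[ℝ] ℂ) (ω : ℂ) :
    L ω = (L 1 - Complex.I * L Complex.I) / 2 * ω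
        + (L 1 + Complex.I * L Complex.I) / 2 * (starRingEnd ℂ ω) := by
  have hω : ω = (ω.re : ℂ) + (ω.im : ℂ) * Complex.I := (Complex.re_add_im ω).symm
  have h1 : L ω = (ω.re : ℂ) * L 1 + (ω.im : ℂ) * L Complex.I := by
    conv_lhs => rw [hω]
    have h2 : (ω.re : ℂ) + (ω.im : ℂ) * Complex.I = ω.re • (1 : ℂ) + ω.im • Complex.I := by
      simp [Complex.real_smul]
    rw [h2, map_add, map_smul, map_smul, Complex.real_smul, Complex.real_smul]
  have hconj : (starRingEnd ℂ) ω = (ω.re : ℂ) - (ω.im : ℂ) * Complex.I := by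
    apply Complex.ext <;> simp
  rw [h1, hconj]
  nth_rewrite 3 [hω]
  linear_combination ((ω.im : ℂ) * L Complex.I) * Complex.I_sq

/-- If `σ` is C² on the unit disk with `σ_z(0) = 0` and
`|σ_{zz} − σ_z²| + 2|σ_{z z̄}| ≤ 1/(1−|z|²)²`, then `‖∇σ(z)‖ ≤ 2|z|/(1−|z|²)`. -/
theorem grad_sigma_bound (σ : ℂ → ℝ)
    (hσ : ContDiffOn ℝ 2 σ (ball (0 : ℂ) 1))
    (hcrit : wirtingerZReal σ 0 = 0)
    (hbound : ∀ z ∈ ball (0 : ℂ) 1,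
      ‖wirtingerZ (wirtingerZReal σ) z - (wirtingerZReal σ z) ^ 2‖ +
          2 * ‖wirtingerZBar (wirtingerZReal σ) z‖ ≤ 1 / (1 - ‖z‖ ^ 2) ^ 2) :
    ∀ z ∈ ball (0 : ℂ) 1, ‖fderiv ℝ σ z‖ ≤ 2 * ‖z‖ / (1 - ‖z‖ ^ 2) := by
  intro z hz
  set k := wirtingerZReal σ with hk_def
  have hkdiff : ∀ w ∈ ball (0 : ℂ) 1, DifferentiableAt ℝ k w := by
    intro w hw
    have h1 : ContDiffOn ℝ 1 (fderiv ℝ σ) (ball 0 1) :=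
      hσ.fderiv_of_isOpen isOpen_ball (by norm_num)
    have h2 : DifferentiableAt ℝ (fderiv ℝ σ) w :=
      ((h1.differentiableOn (by norm_num)) w hw).differentiableAt (isOpen_ball.mem_nhds hw)
    have e1 : DifferentiableAt ℝ (fun z => fderiv ℝ σ z 1) w :=
      h2.clm_apply (differentiableAt_const _)
    have e2 : DifferentiableAt ℝ (fun z => fderiv ℝ σ z Complex.I) w :=
      h2.clm_apply (differentiableAt_const _)
    have e1' : DifferentiableAt ℝ (fun z => ((fderiv ℝ σ z 1 : ℝ) : ℂ)) w :=
      Complex.ofRealCLM.differentiable.differentiableAt.comp w e1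
    have e2' : DifferentiableAt ℝ (fun z => ((fderiv ℝ σ z Complex.I : ℝ) : ℂ)) w :=
      Complex.ofRealCLM.differentiable.differentiableAt.comp w e2
    have hsub := e1'.sub (e2'.const_mul Complex.I)
    have hmul := hsub.mul_const ((2:ℂ)⁻¹)
    have hk : k = fun y => ((fun z => ((fderiv ℝ σ z 1 : ℝ) : ℂ)) - fun y => Complex.I * ((fderiv ℝ σ y Complex.I : ℝ) : ℂ)) y * 2⁻¹ := by
      funext y
      simp only [hk_def, wirtingerZReal, div_eq_mul_inv, Pi.sub_apply]
    rw [hk]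
    exact hmul
  rcases eq_or_ne z 0 with rfl | hz0
  · have h1 := opnorm_le_two_wirt σ 0
    rw [show wirtingerZReal σ 0 = k 0 from rfl, hcrit] at h1
    simpa using h1
  · set r := ‖z‖ with hr
    have hr0 : 0 < r := norm_pos_iff.mpr hz0
    have hr1 : r < 1 := by rw [hr]; exact mem_ball_zero_iff.mp hz
    have hden : ∀ x : ℝ, 0 ≤ x → x ≤ r → 0 < 1 - x ^ 2 := by
      intro x h0 h1x; nlinarith
    set ω : ℂ := r⁻¹ • z with hω
    have hωn : ‖ω‖ = 1 := by
      rw [hω, norm_smul, Real.norm_eq_abs, abs_of_pos (inv_pos.mpr hr0), ← hr,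
        inv_mul_cancel₀ hr0.ne']
    have hrω : r • ω = z := by
      rw [hω, smul_smul, mul_inv_cancel₀ hr0.ne', one_smul]
    have hnx : ∀ x : ℝ, 0 ≤ x → ‖x • ω‖ = x := by
      intro x h0
      rw [norm_smul, hωn, mul_one, Real.norm_eq_abs, _root_.abs_of_nonneg h0]
    have hmem : ∀ x : ℝ, 0 ≤ x → x ≤ r → x • ω ∈ ball (0 : ℂ) 1 := by
      intro x h0 h1x
      rw [mem_ball_zero_iff, hnx x h0]
      exact lt_of_le_of_lt h1x hr1
    set g : ℝ → ℂ := fun t => k (t • ω) with hg_def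
    set g' : ℝ → ℂ := fun t => fderiv ℝ k (t • ω) ω with hg'_def
    have hgderiv : ∀ x : ℝ, 0 ≤ x → x ≤ r → HasDerivAt g (g' x) x := by
      intro x h0 h1x
      have hd := (hkdiff _ (hmem x h0 h1x)).hasFDerivAt
      have hray : HasDerivAt (fun t : ℝ => t • ω) ω x := by
        simpa using (hasDerivAt_id x).smul_const ω
      exact hd.comp_hasDerivAt x hray
    have hg'bound : ∀ x : ℝ, 0 ≤ x → x ≤ r →
        ‖g' x‖ ≤ 1 / (1 - x ^ 2) ^ 2 + ‖g x‖ ^ 2 := by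
      intro x h0 h1x
      have hmem' := hmem x h0 h1x
      have hb := hbound (x • ω) hmem'
      rw [hnx x h0] at hb
      have h1 : ‖g' x‖ ≤ ‖wirtingerZ k (x • ω)‖ + ‖wirtingerZBar k (x • ω)‖ := by
        have hdecomp := clm_decomp (fderiv ℝ k (x • ω)) ω
        calc ‖g' x‖ = ‖wirtingerZ k (x • ω) * ω + wirtingerZBar k (x • ω) * (starRingEnd ℂ ω)‖ := by
              rw [hg'_def]
              exact congrArg norm hdecomp
          _ ≤ ‖wirtingerZ k (x • ω) * ω‖ + ‖wirtingerZBar k (x • ω) * (starRingEnd ℂ ω)‖ :=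
              norm_add_le _ _
          _ = ‖wirtingerZ k (x • ω)‖ + ‖wirtingerZBar k (x • ω)‖ := by
              rw [norm_mul, norm_mul, hωn, RCLike.norm_conj, hωn, mul_one, mul_one]
      have h2 : ‖wirtingerZ k (x • ω)‖ ≤ ‖wirtingerZ k (x • ω) - (k (x • ω)) ^ 2‖ + ‖g x‖ ^ 2 := by
        have h3 := norm_add_le (wirtingerZ k (x • ω) - (k (x • ω)) ^ 2) ((k (x • ω)) ^ 2)
        rw [sub_add_cancel] at h3
        calc ‖wirtingerZ k (x • ω)‖ ≤ ‖wirtingerZ k (x • ω) - (k (x • ω)) ^ 2‖ + ‖(k (x • ω)) ^ 2‖ := h3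
          _ = ‖wirtingerZ k (x • ω) - (k (x • ω)) ^ 2‖ + ‖g x‖ ^ 2 := by
              rw [norm_pow, hg_def]
      have h4 : 0 ≤ ‖wirtingerZBar k (x • ω)‖ := norm_nonneg _
      linarith
    set M : ℝ := 2 * r / (1 - r ^ 2) + 1 with hM
    have h1r : (0 : ℝ) < 1 - r ^ 2 := hden r hr0.le le_rfl
    have hM0 : 0 < M := by rw [hM]; positivity
    have key : ∀ ε : ℝ, 0 < ε → ε * Real.exp (M * r) < 1 →
        ‖g r‖ ≤ r / (1 - r ^ 2) + ε * Real.exp (M * r) := by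
      intro ε hε hε1
      set B : ℝ → ℝ := fun x => x / (1 - x ^ 2) + ε * Real.exp (M * x) with hB_def
      set B' : ℝ → ℝ := fun x => (1 + x ^ 2) / (1 - x ^ 2) ^ 2 + ε * (M * Real.exp (M * x))
        with hB'_def
      have hBd : ∀ x : ℝ, 0 ≤ x → x ≤ r → HasDerivAt B (B' x) x := by
        intro x h0 h1x
        have hd1 : HasDerivAt (fun x : ℝ => x / (1 - x ^ 2)) ((1 + x ^ 2) / (1 - x ^ 2) ^ 2) x := by
          have hq : HasDerivAt (fun x : ℝ => 1 - x ^ 2) (-(2 * x)) x := by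
            simpa using ((hasDerivAt_pow 2 x).const_sub 1)
          have := (hasDerivAt_id x).div hq (hden x h0 h1x).ne'
          refine this.congr_deriv ?_
          have := (hden x h0 h1x).ne'
          simp only [id_eq]
          ring
        have hd2 : HasDerivAt (fun x : ℝ => ε * Real.exp (M * x)) (ε * (M * Real.exp (M * x))) x := by
          have h2 : HasDerivAt (fun x : ℝ => M * x) M x := by
            simpa using (hasDerivAt_id x).const_mul M
          have h3 := (Real.hasDerivAt_exp (M * x)).comp x h2
          have h4 := h3.const_mul ε
          simpa [Function.comp, mul_comm] using h4
        exact hd1.add hd2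
      have main := image_norm_le_of_norm_deriv_right_lt_deriv_boundary'
        (f := g) (f' := g') (a := 0) (b := r) (B := B) (B' := B')
        (fun x hx => (hgderiv x hx.1 hx.2).continuousAt.continuousWithinAt)
        (fun x hx => (hgderiv x hx.1 hx.2.le).hasDerivWithinAt)
        (by
          have hg0 : g 0 = 0 := by
            rw [hg_def]
            simp only [zero_smul]
            exact hcrit
          rw [hg0, norm_zero, hB_def]
          simp only [ne_eq]
          positivity)
        (fun x hx => (hBd x hx.1 hx.2).continuousAt.continuousWithinAt)
        (fun x hx => (hBd x hx.1 hx.2.le).hasDerivWithinAt)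
        (by
          intro x hx heq
          have h1 := hg'bound x hx.1 hx.2.le
          rw [heq] at h1
          have hdx := hden x hx.1 hx.2.le
          have hbmono : x / (1 - x ^ 2) ≤ r / (1 - r ^ 2) := by
            rw [div_le_div_iff₀ hdx h1r]
            nlinarith [mul_nonneg (sub_nonneg.mpr hx.2.le) (show (0:ℝ) ≤ 1 + r * x by nlinarith [hx.1])]
          have hexp : Real.exp (M * x) ≤ Real.exp (M * r) :=
            Real.exp_le_exp.mpr (by nlinarith [hx.2.le])
          have hexp0 : 0 < Real.exp (M * x) := Real.exp_pos _
          have hbb0 : 0 ≤ x / (1 - x ^ 2) := div_nonneg hx.1 hdx.le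
          calc ‖g' x‖ ≤ 1 / (1 - x ^ 2) ^ 2 + (B x) ^ 2 := h1
            _ < B' x := by
                rw [hB_def, hB'_def]
                simp only
                have hb2 : (1 + x ^ 2) / (1 - x ^ 2) ^ 2
                    = 1 / (1 - x ^ 2) ^ 2 + (x / (1 - x ^ 2)) ^ 2 := by
                  field_simp
                rw [hb2]
                have hM' : 2 * (x / (1 - x ^ 2)) + ε * Real.exp (M * x) < M := by
                  have h5 : ε * Real.exp (M * x) ≤ ε * Real.exp (M * r) :=
                    mul_le_mul_of_nonneg_left hexp hε.le
                  have hMM : M = 2 * (r / (1 - r ^ 2)) + 1 := by rw [hM]; ring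
                  linarith
                nlinarith [mul_pos hε hexp0])
      have := main (Set.right_mem_Icc.mpr hr0.le)
      simpa [hB_def] using this
    have hkz : ‖k z‖ ≤ r / (1 - r ^ 2) := by
      apply le_of_forall_pos_le_add
      intro δ hδ
      have hE : 0 < Real.exp (M * r) := Real.exp_pos _
      set ε := min (δ / Real.exp (M * r)) (1 / (2 * Real.exp (M * r))) with hεdef
      have hε0 : 0 < ε := lt_min (div_pos hδ hE) (by positivity)
      have hε1 : ε * Real.exp (M * r) < 1 := by
        calc ε * Real.exp (M * r) ≤ (1 / (2 * Real.exp (M * r))) * Real.exp (M * r) :=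
              mul_le_mul_of_nonneg_right (min_le_right _ _) hE.le
          _ = 1 / 2 := by field_simp
          _ < 1 := by norm_num
      have hεδ : ε * Real.exp (M * r) ≤ δ := by
        calc ε * Real.exp (M * r) ≤ (δ / Real.exp (M * r)) * Real.exp (M * r) :=
              mul_le_mul_of_nonneg_right (min_le_left _ _) hE.le
          _ = δ := by field_simp
      have hk1 := key ε hε0 hε1
      have hgr : g r = k z := by rw [hg_def]; simp only; rw [hrω]
      rw [hgr] at hk1
      linarith
    have h1 := opnorm_le_two_wirt σ z
    calc ‖fderiv ℝ σ z‖ ≤ 2 * ‖k z‖ := h1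
      _ ≤ 2 * (r / (1 - r ^ 2)) := by linarith
      _ = 2 * r / (1 - r ^ 2) := by ring
end
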